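/- Let q ≥ 2 and let B be any map assigning to each u ∈ Σ_q^n a set B(u) of sequences. For E ⊆ Σ_q^n and u ∈ E let N_E(u) = {u′ ∈ E : u′ ≠ u and B(u′) ∩ B(u) ≠ ∅}. Let f : Σ_q^n → ℕ be a function such that f(u) ≠ f(u′) whenever u, u′ ∈ Σ_q^n, u ≠ u′ and B(u) ∩ B(u′) ≠ ∅. Then for every E ⊆ Σ_q^n and every u ∈ E there exists a positive integer P ≤ 1 + Σ_{u′ ∈ N_E(u)} τ(|f(u) − f(u′)|) such that f(u) ≢ f(u′) (mod P) for all u′ ∈ N_E(u), where τ(m) denotes the number of positive divisors of m. -/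
import Mathlib


open scoped Classical

/-- Lemma 7, key step of syndrome compression: let `B` assign an arbitrary
error ball to each sequence, and let `f` separate any two distinct sequences of `Σ_q^n`
whose balls intersect. Then for every code `E ⊆ Σ_q^n` and every `u ∈ E` there is a
positive integer `P ≤ 1 + Σ_{u' ∈ N_E(u)} τ(|f(u) - f(u')|)` with
`f(u) ≢ f(u') (mod P)` for all `u' ∈ N_E(u)`. -/
theorem stmt12 (q n : ℕ) (hq : 2 ≤ q)
    (B : List ℕ → Set (List ℕ)) (f : List ℕ → ℕ)
    (hf : ∀ u u' : List ℕ,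
      u.length = n → (∀ a ∈ u, a < q) → u'.length = n → (∀ a ∈ u', a < q) →
      u ≠ u' → (B u ∩ B u').Nonempty → f u ≠ f u')
    (E : Finset (List ℕ)) (hE : ∀ u ∈ E, u.length = n ∧ ∀ a ∈ u, a < q)
    (u : List ℕ) (hu : u ∈ E) :
    ∃ P : ℕ, 0 < P ∧
      P ≤ 1 + ∑ u' ∈ E.filter (fun u' => u' ≠ u ∧ (B u' ∩ B u).Nonempty),
              (((f u : ℤ) - (f u' : ℤ)).natAbs).divisors.card ∧
      ∀ u' ∈ E.filter (fun u' => u' ≠ u ∧ (B u' ∩ B u).Nonempty),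
        ¬ (f u ≡ f u' [MOD P]) := by
  set N := E.filter (fun u' => u' ≠ u ∧ (B u' ∩ B u).Nonempty) with hNdef
  set T := ∑ u' ∈ N, (((f u : ℤ) - (f u' : ℤ)).natAbs).divisors.card with hTdef
  have key : ∀ u' ∈ N, ((f u : ℤ) - (f u' : ℤ)).natAbs ≠ 0 := by
    intro u' hu'
    rw [hNdef, Finset.mem_filter] at hu'
    obtain ⟨hu'E, hne, hint⟩ := hu'
    obtain ⟨h1, h2⟩ := hE u hu
    obtain ⟨h3, h4⟩ := hE u' hu'E
    have hne' : f u ≠ f u' :=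
      hf u u' h1 h2 h3 h4 (Ne.symm hne) (by rwa [Set.inter_comm])
    intro h
    rw [Int.natAbs_eq_zero, sub_eq_zero] at h
    exact hne' (by exact_mod_cast h)
  by_contra hcon
  push_neg at hcon
  have hsub : Finset.Icc 1 (1 + T) ⊆
      N.biUnion (fun u' => (((f u : ℤ) - (f u' : ℤ)).natAbs).divisors) := by
    intro P hP
    rw [Finset.mem_Icc] at hP
    obtain ⟨u', hu', hmod⟩ := hcon P (by omega) hP.2
    refine Finset.mem_biUnion.2 ⟨u', hu', ?_⟩
    rw [Nat.mem_divisors]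
    refine ⟨?_, key u' hu'⟩
    have hdvd : (P : ℤ) ∣ (f u' : ℤ) - (f u : ℤ) := (Nat.modEq_iff_dvd).1 hmod
    have hdvd2 : (P : ℤ) ∣ (f u : ℤ) - (f u' : ℤ) := by
      have := hdvd.neg_right
      simpa using this
    have := Int.natAbs_dvd_natAbs.2 hdvd2
    simpa using this
  have h1 := Finset.card_le_card hsub
  have h2 := Finset.card_biUnion_le (s := N)
    (t := fun u' => (((f u : ℤ) - (f u' : ℤ)).natAbs).divisors)
  rw [Nat.card_Icc] at h1
  omega
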